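/- If the weights ω_n are deterministic constants and S is a square-integrable (F_n)-martingale, then α_n = 0 for all n, hence β_n = 0, and the optimal hedging strategy is ξ*_n = ρ_n = (∑_{i=n}^{N} ω_i E[H_i ΔS_n | F_{n-1}]) / (∑_{i=n}^{N} ω_i E[ΔS_n^2 | F_{n-1}]), which does not depend on the initial capital c (with 0/0 := 0). -/

import Mathlib

open MeasureTheory Finset

/-- `A_n = ∑_{i=n}^N ω_i ∏_{j=n+1}^i (1 - β_j ΔS_j)`. -/
def Aproc {Ω : Type*} (N : ℕ) (w β ΔS : ℕ → Ω → ℝ) (n : ℕ) (x : Ω) : ℝ :=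
  ∑ i ∈ Finset.Icc n N, w i x * ∏ j ∈ Finset.Icc (n + 1) i, (1 - β j x * ΔS j x)

/-- `D_n = ∑_{i=n}^N ω_i ∏_{j=n+1}^i (1 - β_j ΔS_j)²`. -/
def Dproc {Ω : Type*} (N : ℕ) (w β ΔS : ℕ → Ω → ℝ) (n : ℕ) (x : Ω) : ℝ :=
  ∑ i ∈ Finset.Icc n N, w i x * ∏ j ∈ Finset.Icc (n + 1) i, (1 - β j x * ΔS j x) ^ 2


/-- Corollary 1: if the weights are deterministic constants and `S` is a square-integrable
martingale, then `α_n = 0` a.s., hence `β_n = 0` a.s., and the optimal strategy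
`ξ*_n = ρ_n - β_n (c + G_{n-1}(ξ*))` reduces a.s. to
`ξ*_n = ρ_n = (∑_{i=n}^N ω_i E[H_i ΔS_n | F_{n-1}]) / (∑_{i=n}^N ω_i E[ΔS_n² | F_{n-1}])`,
independent of the initial capital `c` (with `0/0 := 0`). -/
theorem stmt_11 {Ω : Type*} {m0 : MeasurableSpace Ω} (μ : Measure Ω) [IsProbabilityMeasure μ]
    (N : ℕ) (ℱ : Filtration ℕ m0) (ΔS w H : ℕ → Ω → ℝ) (αp ηp δp β ρ : ℕ → Ω → ℝ)
    (hw : ∀ n x, w n x ∈ Set.Icc (0 : ℝ) 1)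
    (hwa : ∀ n, StronglyMeasurable[ℱ n] (w n))
    (hHa : ∀ n, StronglyMeasurable[ℱ n] (H n))
    (hSa : ∀ n, StronglyMeasurable[ℱ n] (ΔS n))
    (hH : ∀ n, MemLp (H n) 2 μ)
    (hSloc : ∀ n, Integrable (fun x => ΔS n x ^ 2) μ)
    (hβ : ∀ n x, β n x = αp n x / δp n x)
    (hρ : ∀ n x, ρ n x = ηp n x / δp n x)
    (hβ0 : ∀ x, β 0 x = 0) (hρ0 : ∀ x, ρ 0 x = 0)
    (hα : ∀ n ∈ Finset.Icc 1 N,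
      αp n =ᵐ[μ] μ[fun x => ΔS n x * Aproc N w β ΔS n x | ℱ (n - 1)])
    (hη : ∀ n ∈ Finset.Icc 1 N,
      ηp n =ᵐ[μ] μ[fun x => ΔS n x *
        ∑ i ∈ Finset.Icc n N, H i x * w i x *
          ∏ j ∈ Finset.Icc (n + 1) i, (1 - β j x * ΔS j x) | ℱ (n - 1)])
    (hδ : ∀ n ∈ Finset.Icc 1 N,
      δp n =ᵐ[μ] μ[fun x => ΔS n x ^ 2 * Dproc N w β ΔS n x | ℱ (n - 1)])
    (ωc : ℕ → ℝ) (hωc : ∀ n x, w n x = ωc n)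
    (hmart : ∀ n ∈ Finset.Icc 1 N, μ[ΔS n | ℱ (n - 1)] =ᵐ[μ] 0)
    (c : ℝ) (ξstar : ℕ → Ω → ℝ)
    (hξ : ∀ n ∈ Finset.Icc 1 N, ∀ x, ξstar n x
      = ρ n x - β n x * (c + ∑ k ∈ Finset.Icc 1 (n - 1), ξstar k x * ΔS k x))
    (hHS : ∀ n i, Integrable (fun x => H i x * ΔS n x) μ) :
    ∀ n ∈ Finset.Icc 1 N,
      αp n =ᵐ[μ] 0 ∧
      β n =ᵐ[μ] 0 ∧
      ξstar n =ᵐ[μ] ρ n ∧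
      ρ n =ᵐ[μ] fun x =>
        (∑ i ∈ Finset.Icc n N, ωc i * (μ[fun y => H i y * ΔS n y | ℱ (n - 1)]) x)
          / (∑ i ∈ Finset.Icc n N, ωc i * (μ[fun y => ΔS n y ^ 2 | ℱ (n - 1)]) x) := by
    classical
  -- a.e. vanishing of β on an interval gives the constant value of Aproc
  have hzero_set : ∀ n : ℕ, (∀ j, n < j → j ≤ N → β j =ᵐ[μ] 0) →
      ∀ᵐ x ∂μ, ∀ j ∈ Finset.Icc (n + 1) N, β j x = 0 := by
    intro n hj
    rw [Filter.eventually_all_finset]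
    intro j hjm
    rw [Finset.mem_Icc] at hjm
    exact hj j (by omega) hjm.2
  have hkey : ∀ n, 1 ≤ n → n ≤ N → (∀ j, n < j → j ≤ N → β j =ᵐ[μ] 0) →
      αp n =ᵐ[μ] 0 := by
    intro n h1 h2 hj
    refine (hα n (Finset.mem_Icc.mpr ⟨h1, h2⟩)).trans ?_
    have h1' : (fun x => ΔS n x * Aproc N w β ΔS n x) =ᵐ[μ]
        ((∑ i ∈ Finset.Icc n N, ωc i) • ΔS n) := by
      filter_upwards [hzero_set n hj] with x hx
      simp only [Pi.smul_apply, smul_eq_mul, Aproc, hωc]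
      rw [Finset.mul_sum, Finset.sum_mul]
      refine Finset.sum_congr rfl fun i hi => ?_
      rw [Finset.mem_Icc] at hi
      rw [Finset.prod_eq_one, mul_one, mul_comm]
      intro j hjm
      rw [Finset.mem_Icc] at hjm
      rw [hx j (Finset.mem_Icc.mpr ⟨hjm.1, le_trans hjm.2 hi.2⟩)]
      ring
    refine (condExp_congr_ae h1').trans ?_
    refine (condExp_smul _ _ _).trans ?_
    filter_upwards [hmart n (Finset.mem_Icc.mpr ⟨h1, h2⟩)] with x hx
    simp [hx]
  have hβkey : ∀ n, 1 ≤ n → n ≤ N → (∀ j, n < j → j ≤ N → β j =ᵐ[μ] 0) →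
      β n =ᵐ[μ] 0 := by
    intro n h1 h2 hj
    filter_upwards [hkey n h1 h2 hj] with x hx
    simp only [Pi.zero_apply] at hx ⊢
    rw [hβ n x, hx, zero_div]
  have βall : ∀ d n, 1 ≤ n → n ≤ N → N - n ≤ d → β n =ᵐ[μ] 0 := by
    intro d
    induction d with
    | zero =>
      intro n h1 h2 h3
      exact hβkey n h1 h2 fun j hj hj' => absurd hj' (by omega)
    | succ d ih =>
      intro n h1 h2 h3
      exact hβkey n h1 h2 fun j hj hj' => ih j (by omega) hj' (by omega)
  intro n hn
  rw [Finset.mem_Icc] at hn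
  obtain ⟨h1, h2⟩ := hn
  have hjall : ∀ j, n < j → j ≤ N → β j =ᵐ[μ] 0 :=
    fun j hj hj' => βall (N - j) j (by omega) hj' le_rfl
  have hα0 : αp n =ᵐ[μ] 0 := hkey n h1 h2 hjall
  have hβn : β n =ᵐ[μ] 0 := hβkey n h1 h2 hjall
  refine ⟨hα0, hβn, ?_, ?_⟩
  · filter_upwards [hβn] with x hx
    simp only [Pi.zero_apply] at hx
    rw [hξ n (Finset.mem_Icc.mpr ⟨h1, h2⟩) x, hx]
    ring
  · -- ρ n = num / den a.e.
    have hη2 : ηp n =ᵐ[μ] fun x =>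
        ∑ i ∈ Finset.Icc n N, ωc i * (μ[fun y => H i y * ΔS n y | ℱ (n - 1)]) x := by
      refine (hη n (Finset.mem_Icc.mpr ⟨h1, h2⟩)).trans ?_
      have heq : (fun x => ΔS n x * ∑ i ∈ Finset.Icc n N, H i x * w i x *
            ∏ j ∈ Finset.Icc (n + 1) i, (1 - β j x * ΔS j x)) =ᵐ[μ]
          ∑ i ∈ Finset.Icc n N, ωc i • fun y => H i y * ΔS n y := by
        filter_upwards [hzero_set n hjall] with x hx
        simp only [Finset.sum_apply, Pi.smul_apply, smul_eq_mul, hωc]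
        rw [Finset.mul_sum]
        refine Finset.sum_congr rfl fun i hi => ?_
        rw [Finset.mem_Icc] at hi
        rw [Finset.prod_eq_one, mul_one]
        · ring
        intro j hjm
        rw [Finset.mem_Icc] at hjm
        rw [hx j (Finset.mem_Icc.mpr ⟨hjm.1, le_trans hjm.2 hi.2⟩)]
        ring
      refine (condExp_congr_ae heq).trans ?_
      refine (condExp_finset_sum (fun i _ => (hHS n i).smul (ωc i)) _).trans ?_
      have hs : ∀ᵐ x ∂μ, ∀ i ∈ Finset.Icc n N,
          (μ[ωc i • fun y => H i y * ΔS n y | ℱ (n - 1)]) x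
            = ωc i * (μ[fun y => H i y * ΔS n y | ℱ (n - 1)]) x := by
        rw [Filter.eventually_all_finset]
        intro i _
        filter_upwards [condExp_smul (m := ℱ (n - 1)) (μ := μ) (ωc i)
          (fun y => H i y * ΔS n y)] with x hx
        simpa using hx
      filter_upwards [hs] with x hx
      rw [Finset.sum_apply]
      exact Finset.sum_congr rfl hx
    have hδ2 : δp n =ᵐ[μ] fun x =>
        ∑ i ∈ Finset.Icc n N, ωc i * (μ[fun y => ΔS n y ^ 2 | ℱ (n - 1)]) x := by
      refine (hδ n (Finset.mem_Icc.mpr ⟨h1, h2⟩)).trans ?_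
      have heq : (fun x => ΔS n x ^ 2 * Dproc N w β ΔS n x) =ᵐ[μ]
          ((∑ i ∈ Finset.Icc n N, ωc i) • fun y => ΔS n y ^ 2) := by
        filter_upwards [hzero_set n hjall] with x hx
        simp only [Pi.smul_apply, smul_eq_mul, Dproc, hωc]
        rw [Finset.mul_sum, Finset.sum_mul]
        refine Finset.sum_congr rfl fun i hi => ?_
        rw [Finset.mem_Icc] at hi
        rw [Finset.prod_eq_one, mul_one, mul_comm]
        intro j hjm
        rw [Finset.mem_Icc] at hjm
        rw [hx j (Finset.mem_Icc.mpr ⟨hjm.1, le_trans hjm.2 hi.2⟩)]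
        ring
      refine (condExp_congr_ae heq).trans ?_
      filter_upwards [condExp_smul (m := ℱ (n - 1)) (μ := μ)
        (∑ i ∈ Finset.Icc n N, ωc i) (fun y => ΔS n y ^ 2)] with x hx
      rw [hx]
      simp only [Pi.smul_apply, smul_eq_mul]
      rw [Finset.sum_mul]
    filter_upwards [hη2, hδ2] with x hxη hxδ
    rw [hρ n x, hxη, hxδ]
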